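/- Let T : E → E be γ-Lipschitz with 0 < γ ≤ 1, let x* ∈ E satisfy T(x*) = x*, let x₀ ∈ E with T(x₀) ≠ x₀, and let 0 < ε < 2·‖T(x₀) - x₀‖. Let D* ≥ ‖x₀ - x*‖ with D* > 0, set λ = ε/(4·D* + ε), and let the sequence (x_k) be defined by x_{k+1} = λ·x₀ + (1-λ)·T(x_k). Then for k = ⌈ln(2·‖T(x₀) - x₀‖/ε) / (ln(1/(1-λ)) + ln(1/γ))⌉ we have ‖T(x_k) - x_k‖ ≤ ε. -/

import Mathlib

/-- Iteration complexity of the fixed-step Halpern iteration for γ-Lipschitz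
operators with 0 < γ ≤ 1: with step size λ = ε/(4D⋆ + ε) where D⋆ ≥ ‖x₀ - x⋆‖,
after `k = ⌈ln(2‖T x₀ - x₀‖/ε) / (ln(1/(1-λ)) + ln(1/γ))⌉` iterations the
fixed-point error is at most ε. -/
theorem fixed_step_halpern_iteration_complexity
    {E : Type*} [NormedAddCommGroup E] [NormedSpace ℝ E]
    (T : E → E) (γ : ℝ) (hγ0 : 0 < γ) (hγ1 : γ ≤ 1)
    (hT : ∀ x y : E, ‖T x - T y‖ ≤ γ * ‖x - y‖)
    (xs : E) (hxs : T xs = xs)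
    (x₀ : E) (hx₀ : T x₀ ≠ x₀)
    (ε : ℝ) (hε0 : 0 < ε) (hε1 : ε < 2 * ‖T x₀ - x₀‖)
    (Ds : ℝ) (hDs0 : 0 < Ds) (hDs : ‖x₀ - xs‖ ≤ Ds)
    (l : ℝ) (hl : l = ε / (4 * Ds + ε))
    (x : ℕ → E) (hx0 : x 0 = x₀)
    (hx : ∀ k : ℕ, x (k + 1) = l • x₀ + (1 - l) • T (x k)) :
    ∀ k : ℕ,
      k = ⌈Real.log (2 * ‖T x₀ - x₀‖ / ε) /
            (Real.log (1 / (1 - l)) + Real.log (1 / γ))⌉₊ →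
      ‖T (x k) - x k‖ ≤ ε := by
  intro k hk
  set r0 := ‖T x₀ - x₀‖ with hr0def
  have hr0 : 0 < r0 := norm_pos_iff.mpr (sub_ne_zero.mpr hx₀)
  have hden : 0 < 4 * Ds + ε := by linarith
  have hl0 : 0 < l := by rw [hl]; positivity
  have hl1 : l < 1 := by rw [hl, div_lt_one hden]; linarith
  have h1l : 0 < 1 - l := by linarith
  set q := (1 - l) * γ with hq
  have hq0 : 0 < q := mul_pos h1l hγ0
  have hq1 : q < 1 := by nlinarith
  -- all iterates stay in the Ds-ball around xs
  have hD : ∀ n, ‖x n - xs‖ ≤ Ds := by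
    intro n
    induction n with
    | zero => rw [hx0]; exact hDs
    | succ n ih =>
      have hrw : x (n + 1) - xs
          = l • (x₀ - xs) + (1 - l) • (T (x n) - T xs) := by
        rw [hx n, hxs]; module
      have h1 : ‖T (x n) - T xs‖ ≤ γ * ‖x n - xs‖ := hT _ _
      calc ‖x (n + 1) - xs‖
          ≤ ‖l • (x₀ - xs)‖ + ‖(1 - l) • (T (x n) - T xs)‖ := by
            rw [hrw]; exact norm_add_le _ _
        _ = l * ‖x₀ - xs‖ + (1 - l) * ‖T (x n) - T xs‖ := by
            rw [norm_smul, norm_smul, Real.norm_of_nonneg hl0.le,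
              Real.norm_of_nonneg h1l.le]
        _ ≤ Ds := by
            nlinarith [norm_nonneg (x n - xs), mul_le_mul_of_nonneg_left h1 h1l.le,
              mul_nonneg hl0.le (sub_nonneg.mpr hDs),
              mul_nonneg h1l.le (sub_nonneg.mpr ih),
              mul_nonneg (mul_nonneg h1l.le (sub_nonneg.mpr hγ1)) (norm_nonneg (x n - xs))]
  -- geometric decay of steps
  have hs : ∀ n, ‖x (n + 1) - x n‖ ≤ q ^ n * r0 := by
    intro n
    induction n with
    | zero =>
      have hrw : x 1 - x 0 = (1 - l) • (T x₀ - x₀) := by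
        rw [hx 0, hx0]; module
      rw [hrw, norm_smul, Real.norm_of_nonneg h1l.le, pow_zero, one_mul]
      nlinarith
    | succ n ih =>
      have hrw : x (n + 2) - x (n + 1)
          = (1 - l) • (T (x (n + 1)) - T (x n)) := by
        rw [hx (n + 1), hx n]; module
      have h1 : ‖T (x (n + 1)) - T (x n)‖ ≤ γ * ‖x (n + 1) - x n‖ := hT _ _
      calc ‖x (n + 2) - x (n + 1)‖ = (1 - l) * ‖T (x (n + 1)) - T (x n)‖ := by
            rw [hrw, norm_smul, Real.norm_of_nonneg h1l.le]
        _ ≤ (1 - l) * (γ * (q ^ n * r0)) := by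
            apply mul_le_mul_of_nonneg_left _ h1l.le
            calc ‖T (x (n + 1)) - T (x n)‖ ≤ γ * ‖x (n + 1) - x n‖ := h1
              _ ≤ γ * (q ^ n * r0) := mul_le_mul_of_nonneg_left ih hγ0.le
        _ = q ^ (n + 1) * r0 := by rw [hq, pow_succ]; ring
  -- residual bound after m+1 steps
  have hr : ∀ m, ‖T (x (m + 1)) - x (m + 1)‖ ≤ q ^ (m + 1) * r0 + 2 * Ds * l := by
    intro m
    have hrw : T (x (m + 1)) - x (m + 1)
        = (1 - l) • (T (x (m + 1)) - T (x m)) + l • (T (x (m + 1)) - x₀) := by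
      conv_lhs => rw [hx m]
      conv_rhs => rw [hx m]
      module
    have hb : ‖T (x (m + 1)) - x₀‖ ≤ 2 * Ds := by
      have h1 : ‖T (x (m + 1)) - x₀‖ ≤ ‖T (x (m + 1)) - xs‖ + ‖xs - x₀‖ :=
        norm_sub_le_norm_sub_add_norm_sub _ _ _
      have h2 : ‖T (x (m + 1)) - xs‖ ≤ γ * ‖x (m + 1) - xs‖ := by
        have := hT (x (m + 1)) xs; rwa [hxs] at this
      have h3 : ‖xs - x₀‖ ≤ Ds := by rw [norm_sub_rev]; exact hDs
      nlinarith [hD (m + 1), norm_nonneg (x (m + 1) - xs)]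
    have h1 : ‖T (x (m + 1)) - T (x m)‖ ≤ γ * ‖x (m + 1) - x m‖ := hT _ _
    calc ‖T (x (m + 1)) - x (m + 1)‖
        ≤ ‖(1 - l) • (T (x (m + 1)) - T (x m))‖ + ‖l • (T (x (m + 1)) - x₀)‖ := by
          rw [hrw]; exact norm_add_le _ _
      _ = (1 - l) * ‖T (x (m + 1)) - T (x m)‖ + l * ‖T (x (m + 1)) - x₀‖ := by
          rw [norm_smul, norm_smul, Real.norm_of_nonneg hl0.le,
            Real.norm_of_nonneg h1l.le]
      _ ≤ (1 - l) * (γ * (q ^ m * r0)) + l * (2 * Ds) := by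
          gcongr
          · calc ‖T (x (m + 1)) - T (x m)‖ ≤ γ * ‖x (m + 1) - x m‖ := h1
              _ ≤ γ * (q ^ m * r0) := mul_le_mul_of_nonneg_left (hs m) hγ0.le
      _ = q ^ (m + 1) * r0 + 2 * Ds * l := by rw [hq, pow_succ]; ring
  -- the small term is at most ε/2
  have h2Dsl : 2 * Ds * l ≤ ε / 2 := by
    rw [hl, ← mul_div_assoc, div_le_iff₀ hden]
    nlinarith [sq_nonneg ε]
  -- log manipulations
  have hnum : 0 < Real.log (2 * r0 / ε) :=
    Real.log_pos (by rw [lt_div_iff₀ hε0]; linarith)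
  have hlogq : Real.log (1 / (1 - l)) + Real.log (1 / γ) = -Real.log q := by
    rw [one_div, one_div, Real.log_inv, Real.log_inv, hq,
      Real.log_mul (ne_of_gt h1l) (ne_of_gt hγ0)]
    ring
  have hlogqneg : Real.log q < 0 := Real.log_neg hq0 hq1
  have hnegpos : 0 < -Real.log q := by linarith
  rw [hlogq] at hk
  have hk1 : 1 ≤ k := by
    rw [hk]
    exact Nat.one_le_iff_ne_zero.mpr (by
      simp only [ne_eq, Nat.ceil_eq_zero, not_le]
      positivity)
  have hkge : Real.log (2 * r0 / ε) / (-Real.log q) ≤ (k : ℝ) := by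
    rw [hk]; exact Nat.le_ceil _
  have hmul : Real.log (2 * r0 / ε) ≤ (k : ℝ) * (-Real.log q) :=
    (div_le_iff₀ hnegpos).mp hkge
  have hqk : q ^ k * r0 ≤ ε / 2 := by
    have hlogle : Real.log (q ^ k) ≤ Real.log (ε / (2 * r0)) := by
      rw [Real.log_pow, Real.log_div (ne_of_gt hε0) (by positivity)]
      rw [Real.log_div (by positivity) (ne_of_gt hε0)] at hmul
      linarith
    have hle : q ^ k ≤ ε / (2 * r0) :=
      (Real.log_le_log_iff (by positivity) (by positivity)).mp hlogle
    have := mul_le_mul_of_nonneg_right hle (le_of_lt hr0)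
    calc q ^ k * r0 ≤ ε / (2 * r0) * r0 := this
      _ = ε / 2 := by field_simp
  obtain ⟨m, rfl⟩ : ∃ m, k = m + 1 := ⟨k - 1, (Nat.succ_pred_eq_of_pos hk1).symm⟩
  calc ‖T (x (m + 1)) - x (m + 1)‖ ≤ q ^ (m + 1) * r0 + 2 * Ds * l := hr m
    _ ≤ ε / 2 + ε / 2 := by linarith
    _ = ε := by ring
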